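/- Let K = Q(√D) with D squarefree, D ∉ {0,1}, n ≥ 1 and d ≥ 0. The generalized polynomials g_{ij} defined by g_{ij}(z) = z^i τ(z)^j + τ(z)^i z^j and g_{ji}(z) = √D(z^i τ(z)^j − τ(z)^i z^j) for multi-indices i < j (lexicographically), together with g_{ii}(z) = z^i τ(z)^i, for all multi-indices with |i| + |j| ≤ d, form a basis of the Q-vector space of Q-valued generalized polynomials in n variables of degree at most d. -/

import Mathlib

open MvPolynomial

set_option linter.unusedSectionVars false
set_option maxHeartbeats 1000000

/-! ### Arithmetic auxiliary lemmas -/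

lemma aux_indep (D : ℤ) (hsq : Squarefree D) (hD1 : D ≠ 1)
    (K : Type*) [Field K] [Algebra ℚ K] (sd : K) (hsd : sd ^ 2 = (D : K)) :
    ∀ p q : ℚ, algebraMap ℚ K p + algebraMap ℚ K q * sd = 0 → p = 0 ∧ q = 0 := by
  have hinj : Function.Injective (algebraMap ℚ K) := (algebraMap ℚ K).injective
  intro p q h
  by_cases hq : q = 0
  · subst hq
    simp only [map_zero, zero_mul, add_zero] at h
    exact ⟨hinj (by simpa using h), rfl⟩
  · exfalso
    have hq' : algebraMap ℚ K q ≠ 0 := fun hc => hq (hinj (by simpa using hc))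
    have hsd' : sd = algebraMap ℚ K (-p / q) := by
      rw [map_div₀, map_neg, eq_div_iff hq']
      linear_combination h
    set r : ℚ := -p / q with hr
    have h2 : (algebraMap ℚ K) (r ^ 2) = algebraMap ℚ K ((D : ℚ)) := by
      rw [map_pow, ← hsd', hsd]
      simp
    have h3 : r ^ 2 = (D : ℚ) := hinj h2
    have hden : r.den = 1 := by
      have : (r ^ 2).den = 1 := by rw [h3]; simp
      rw [Rat.den_pow] at this
      nlinarith [this]
    have hnum : (r.num : ℚ) = r := by
      exact_mod_cast Rat.den_eq_one_iff r |>.mp hden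
    have h4 : r.num ^ 2 = D := by
      have : ((r.num : ℚ)) ^ 2 = ((D : ℚ)) := by rw [hnum]; exact h3
      exact_mod_cast this
    have : IsUnit r.num := hsq r.num (by rw [← sq, h4])
    rcases Int.isUnit_iff.mp this with h5 | h5 <;> rw [h5] at h4 <;> simp at h4 <;> omega

lemma aux_sd_ne (D : ℤ) (hD0 : D ≠ 0) (K : Type*) [Field K] [Algebra ℚ K]
    (sd : K) (hsd : sd ^ 2 = (D : K)) : sd ≠ 0 := by
  have : CharZero K := charZero_of_injective_algebraMap (algebraMap ℚ K).injective
  intro h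
  rw [h] at hsd
  simp only [ne_eq, zero_pow, OfNat.ofNat_ne_zero, not_false_eq_true] at hsd
  exact hD0 (by exact_mod_cast hsd.symm)

section

variable {K : Type*} [Field K] [Algebra ℚ K] {sd : K} {τ : K →ₐ[ℚ] K} {n : ℕ}

lemma aux_tau_apply (hτ : τ sd = -sd) (p q : ℚ) :
    τ (algebraMap ℚ K p + algebraMap ℚ K q * sd) =
      algebraMap ℚ K p - algebraMap ℚ K q * sd := by
  rw [map_add, map_mul, hτ, AlgHom.commutes, AlgHom.commutes]; ring

lemma aux_invol (hgen : ∀ x : K, ∃ a b : ℚ, x = algebraMap ℚ K a + algebraMap ℚ K b * sd)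
    (hτ : τ sd = -sd) (x : K) : τ (τ x) = x := by
  obtain ⟨p, q, rfl⟩ := hgen x
  rw [aux_tau_apply hτ, sub_eq_add_neg, ← neg_mul, ← map_neg, aux_tau_apply hτ]
  push_cast
  ring

lemma aux_fix (hgen : ∀ x : K, ∃ a b : ℚ, x = algebraMap ℚ K a + algebraMap ℚ K b * sd)
    (hτ : τ sd = -sd) (hsd0 : sd ≠ 0) {x : K} (hx : τ x = x) :
    x ∈ (algebraMap ℚ K).range := by
  obtain ⟨p, q, rfl⟩ := hgen x
  rw [aux_tau_apply hτ] at hx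
  have hch : CharZero K := charZero_of_injective_algebraMap (algebraMap ℚ K).injective
  have h2 : algebraMap ℚ K q * (2 * sd) = 0 := by linear_combination -hx
  rcases mul_eq_zero.mp h2 with h | h
  · have : q = 0 := (algebraMap ℚ K).injective (by simpa using h)
    exact ⟨p, by simp [this]⟩
  · rcases mul_eq_zero.mp h with h' | h'
    · exact absurd h' two_ne_zero
    · exact absurd h' hsd0

lemma aux_trace (hgen : ∀ x : K, ∃ a b : ℚ, x = algebraMap ℚ K a + algebraMap ℚ K b * sd)
    (hτ : τ sd = -sd) (x : K) : x + τ x ∈ (algebraMap ℚ K).range := by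
  obtain ⟨p, q, rfl⟩ := hgen x
  rw [aux_tau_apply hτ]
  exact ⟨p + p, by rw [map_add]; ring⟩

lemma aux_anti {D : ℤ} (hsd : sd ^ 2 = (D : K))
    (hgen : ∀ x : K, ∃ a b : ℚ, x = algebraMap ℚ K a + algebraMap ℚ K b * sd)
    (hτ : τ sd = -sd) (x : K) : sd * (x - τ x) ∈ (algebraMap ℚ K).range := by
  obtain ⟨p, q, rfl⟩ := hgen x
  rw [aux_tau_apply hτ]
  refine ⟨q * ((2 * D : ℤ) : ℚ), ?_⟩
  rw [map_mul, map_intCast]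
  push_cast
  linear_combination (-2 * algebraMap ℚ K q) * hsd

/-! ### The exponent correspondence -/

noncomputable def auxEm {n : ℕ} (i j : Fin n →₀ ℕ) : (Fin n × Bool) →₀ ℕ :=
  Finsupp.equivFunOnFinite.symm fun p => if p.2 then j p.1 else i p.1

lemma auxEm_apply (i j : Fin n →₀ ℕ) (p : Fin n × Bool) :
    auxEm i j p = if p.2 then j p.1 else i p.1 := rfl

lemma auxEm_inj {i j k l : Fin n →₀ ℕ} (h : auxEm i j = auxEm k l) : i = k ∧ j = l := by
  constructor <;> ext r
  · have := DFunLike.congr_fun h (r, false)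
    simpa [auxEm_apply] using this
  · have := DFunLike.congr_fun h (r, true)
    simpa [auxEm_apply] using this

lemma auxEm_surj (μ : (Fin n × Bool) →₀ ℕ) :
    μ = auxEm (Finsupp.equivFunOnFinite.symm fun r => μ (r, false))
              (Finsupp.equivFunOnFinite.symm fun r => μ (r, true)) := by
  ext ⟨r, b⟩
  cases b <;> simp [auxEm_apply]

lemma auxEm_deg (i j : Fin n →₀ ℕ) :
    ((auxEm i j).sum fun _ m => m) = (i.sum fun _ m => m) + (j.sum fun _ m => m) := by
  rw [Finsupp.sum_fintype _ _ (fun _ => rfl), Finsupp.sum_fintype _ _ (fun _ => rfl),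
    Finsupp.sum_fintype _ _ (fun _ => rfl)]
  rw [Fintype.sum_prod_type]
  simp only [auxEm_apply, Fintype.sum_bool, if_true, if_false]
  rw [← Finset.sum_add_distrib]
  exact Finset.sum_congr rfl fun r _ => add_comm _ _

noncomputable def auxSw : (Fin n × Bool) ≃ (Fin n × Bool) :=
  Function.Involutive.toPerm (fun p => (p.1, !p.2)) (by intro p; simp)

lemma auxEm_swap (i j : Fin n →₀ ℕ) :
    Finsupp.mapDomain (fun p : Fin n × Bool => (p.1, !p.2)) (auxEm i j) = auxEm j i := by
  have : (fun p : Fin n × Bool => (p.1, !p.2)) = ⇑(auxSw (n := n)) := rfl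
  rw [this]
  ext p
  rw [Finsupp.mapDomain_equiv_apply]
  have hsymm : (auxSw (n := n)).symm p = (p.1, !p.2) := rfl
  rw [hsymm]
  rcases p with ⟨r, b⟩
  cases b <;> simp [auxEm_apply]

lemma aux_prod_monomial (i j : Fin n →₀ ℕ) :
    (∏ r : Fin n, (X (r, false) : MvPolynomial (Fin n × Bool) K) ^ i r) *
      (∏ r : Fin n, X (r, true) ^ j r) = monomial (auxEm i j) (1 : K) := by
  rw [← prod_X_pow_eq_monomial]
  rw [Finset.prod_subset (Finset.subset_univ (auxEm i j).support)
    (fun p _ hp => by rw [Finsupp.notMem_support_iff.mp hp, pow_zero])]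
  rw [Fintype.prod_prod_type]
  simp only [Fintype.prod_bool, auxEm_apply, if_true, if_false]
  rw [← Finset.prod_mul_distrib]
  exact (Finset.prod_congr rfl fun r _ => mul_comm _ _).symm

/-! ### Density lemmas -/

lemma aux_eval_bind₁ (g : Fin n × Bool → K) (h : Fin n × Bool → MvPolynomial (Fin n × Bool) K)
    (φ : MvPolynomial (Fin n × Bool) K) :
    eval g (bind₁ h φ) = eval (fun i => eval g (h i)) φ := by
  simpa using eval₂Hom_bind₁ (RingHom.id K) g h φ

lemma aux_eval_map (u : Fin n × Bool → ℚ) (p : MvPolynomial (Fin n × Bool) ℚ) :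
    eval (fun x => algebraMap ℚ K (u x)) (map (algebraMap ℚ K) p)
      = algebraMap ℚ K (eval u p) := by
  rw [eval_map]
  have : eval u p = eval₂ (RingHom.id ℚ) u p := rfl
  rw [this, eval₂_comp_left (algebraMap ℚ K)]
  rfl

lemma aux_dense
    (hgen : ∀ x : K, ∃ a b : ℚ, x = algebraMap ℚ K a + algebraMap ℚ K b * sd)
    (hind : ∀ p q : ℚ, algebraMap ℚ K p + algebraMap ℚ K q * sd = 0 → p = 0 ∧ q = 0)
    (h : MvPolynomial (Fin n × Bool) K)
    (hv : ∀ v : (Fin n × Bool) → ℚ, eval (fun p => algebraMap ℚ K (v p)) h = 0) :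
    h = 0 := by
  classical
  set f : K → ℚ := fun c => (hgen c).choose with hf
  set g : K → ℚ := fun c => (hgen c).choose_spec.choose with hgdef
  have hspec : ∀ c : K, c = algebraMap ℚ K (f c) + algebraMap ℚ K (g c) * sd :=
    fun c => (hgen c).choose_spec.choose_spec
  have hf0 : f 0 = 0 ∧ g 0 = 0 := hind _ _ (hspec 0).symm
  set h₁ : MvPolynomial (Fin n × Bool) ℚ :=
    ∑ μ ∈ h.support, monomial μ (f (coeff μ h)) with hh₁
  set h₂ : MvPolynomial (Fin n × Bool) ℚ :=
    ∑ μ ∈ h.support, monomial μ (g (coeff μ h)) with hh₂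
  have hc₁ : ∀ μ, coeff μ h₁ = f (coeff μ h) := by
    intro μ
    rw [hh₁, coeff_sum]
    simp only [coeff_monomial]
    rw [Finset.sum_ite_eq' h.support μ]
    by_cases hμ : μ ∈ h.support
    · simp [hμ]
    · simp [hμ, MvPolynomial.notMem_support_iff.mp hμ, hf0.1]
  have hc₂ : ∀ μ, coeff μ h₂ = g (coeff μ h) := by
    intro μ
    rw [hh₂, coeff_sum]
    simp only [coeff_monomial]
    rw [Finset.sum_ite_eq' h.support μ]
    by_cases hμ : μ ∈ h.support
    · simp [hμ]
    · simp [hμ, MvPolynomial.notMem_support_iff.mp hμ, hf0.2]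
  have hdecomp : map (algebraMap ℚ K) h₁ + C sd * map (algebraMap ℚ K) h₂ = h := by
    ext μ
    rw [coeff_add, coeff_map, coeff_C_mul, coeff_map, hc₁, hc₂, mul_comm sd]
    exact (hspec _).symm
  have hzero : ∀ u : (Fin n × Bool) → ℚ, eval u h₁ = 0 ∧ eval u h₂ = 0 := by
    intro u
    have h0 := hv u
    rw [← hdecomp] at h0
    rw [map_add, map_mul, eval_C, aux_eval_map, aux_eval_map, mul_comm sd] at h0
    exact ⟨hind _ _ h0 |>.1, hind _ _ h0 |>.2⟩
  have h₁0 : h₁ = 0 := funext fun u => by rw [(hzero u).1]; simp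
  have h₂0 : h₂ = 0 := funext fun u => by rw [(hzero u).2]; simp
  rw [← hdecomp, h₁0, h₂0]
  simp

lemma aux_eval_zero
    (hgen : ∀ x : K, ∃ a b : ℚ, x = algebraMap ℚ K a + algebraMap ℚ K b * sd)
    (hind : ∀ p q : ℚ, algebraMap ℚ K p + algebraMap ℚ K q * sd = 0 → p = 0 ∧ q = 0)
    (hτ : τ sd = -sd) (hsd0 : sd ≠ 0)
    (h : MvPolynomial (Fin n × Bool) K)
    (h0 : ∀ a : Fin n → K,
      eval (fun p => if p.2 then τ (a p.1) else a p.1) h = 0) :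
    h = 0 := by
  have h2 : (2 : K) ≠ 0 := by
    have : CharZero K := charZero_of_injective_algebraMap (algebraMap ℚ K).injective
    exact two_ne_zero
  set φ : Fin n × Bool → MvPolynomial (Fin n × Bool) K := fun p =>
    if p.2 then X (p.1, false) - C sd * X (p.1, true)
    else X (p.1, false) + C sd * X (p.1, true) with hφ
  set χ : Fin n × Bool → MvPolynomial (Fin n × Bool) K := fun p =>
    if p.2 then C ((2 * sd)⁻¹) * (X (p.1, false) - X (p.1, true))
    else C ((2 : K)⁻¹) * (X (p.1, false) + X (p.1, true)) with hχ
  have hsd2 : sd * (2 * sd)⁻¹ = (2 : K)⁻¹ := by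
    rw [mul_inv_rev, ← mul_assoc, mul_inv_cancel₀ hsd0, one_mul]
  have hinv : bind₁ χ (bind₁ φ h) = h := by
    rw [bind₁_bind₁]
    have hA : (C sd : MvPolynomial (Fin n × Bool) K) * C ((2 * sd)⁻¹) = C ((2 : K)⁻¹) := by
      rw [← C_mul, hsd2]
    have hC : (C ((2 : K)⁻¹) : MvPolynomial (Fin n × Bool) K) + C ((2 : K)⁻¹) = 1 := by
      rw [← C_add, ← C_1]
      congr 1
      rw [← two_mul, mul_inv_cancel₀ h2]
    have : (fun i => bind₁ χ (φ i)) = (X : Fin n × Bool → MvPolynomial (Fin n × Bool) K) := by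
      funext p
      rcases p with ⟨r, b⟩
      cases b
      · simp only [hφ, hχ, if_true, if_false, Bool.false_eq_true, map_add, map_sub, map_mul,
          bind₁_X_right, bind₁_C_right]
        linear_combination (X (r, false) - X (r, true) : MvPolynomial (Fin n × Bool) K) * hA +
          (X (r, false) : MvPolynomial (Fin n × Bool) K) * hC
      · simp only [hφ, hχ, if_true, if_false, Bool.false_eq_true, map_add, map_sub, map_mul,
          bind₁_X_right, bind₁_C_right]
        linear_combination (-(X (r, false) : MvPolynomial (Fin n × Bool) K) +
            X (r, true)) * hA +
          (X (r, true) : MvPolynomial (Fin n × Bool) K) * hC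
    rw [this, bind₁_X_left, AlgHom.id_apply]
  have hzero : bind₁ φ h = 0 := by
    apply aux_dense hgen hind
    intro v
    rw [aux_eval_bind₁]
    have : (fun i => eval (fun p => algebraMap ℚ K (v p)) (φ i)) =
        (fun p : Fin n × Bool => if p.2 then τ ((fun r => algebraMap ℚ K (v (r, false)) +
          algebraMap ℚ K (v (r, true)) * sd) p.1)
          else (fun r => algebraMap ℚ K (v (r, false)) + algebraMap ℚ K (v (r, true)) * sd) p.1) := by
      funext p
      rcases p with ⟨r, b⟩
      cases b
      · simp only [hφ, if_true, if_false, Bool.false_eq_true, map_add, map_sub, map_mul,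
          eval_X, eval_C]
        ring
      · simp only [hφ, if_true, if_false, Bool.false_eq_true, map_sub, map_mul,
          eval_X, eval_C]
        rw [aux_tau_apply hτ]
        ring
    rw [this]
    exact h0 (fun r => algebraMap ℚ K (v (r, false)) + algebraMap ℚ K (v (r, true)) * sd)
  rw [← hinv, hzero, map_zero]

lemma aux_sym
    (hgen : ∀ x : K, ∃ a b : ℚ, x = algebraMap ℚ K a + algebraMap ℚ K b * sd)
    (hind : ∀ p q : ℚ, algebraMap ℚ K p + algebraMap ℚ K q * sd = 0 → p = 0 ∧ q = 0)
    (hτ : τ sd = -sd) (hsd0 : sd ≠ 0)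
    (g : MvPolynomial (Fin n × Bool) K)
    (hg : ∀ a : Fin n → K,
      eval (fun p => if p.2 then τ (a p.1) else a p.1) g ∈ (algebraMap ℚ K).range)
    (i j : Fin n →₀ ℕ) :
    coeff (auxEm j i) g = τ (coeff (auxEm i j) g) := by
  set sw : Fin n × Bool → Fin n × Bool := fun p => (p.1, !p.2) with hsw
  have hswinj : Function.Injective sw := by
    intro p q hpq
    have h1 := congrArg Prod.fst hpq
    have h2 := congrArg Prod.snd hpq
    simp only [hsw] at h1 h2
    exact Prod.ext h1 (Bool.not_inj h2)
  set σg : MvPolynomial (Fin n × Bool) K :=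
    rename sw (map (τ : K →+* K) g) with hσg
  have key : σg = g := by
    apply sub_eq_zero.mp
    refine aux_eval_zero (K := K) (sd := sd) (τ := τ) (n := n) hgen hind hτ hsd0 (σg - g) ?_
    intro a
    set w : Fin n × Bool → K := fun p => if p.2 then τ (a p.1) else a p.1 with hw
    have h1 : eval w σg = τ (eval w g) := by
      rw [hσg, eval_rename, eval_map]
      have h2 : τ (eval w g) = eval₂ ((τ : K →+* K).comp (RingHom.id K)) (⇑τ ∘ w) g :=
        eval₂_comp_left (τ : K →+* K) (RingHom.id K) w g
      rw [RingHom.comp_id] at h2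
      rw [h2]
      congr 1
      funext p
      rcases p with ⟨r, b⟩
      cases b
      · simp [hw, hsw, Function.comp]
      · simp only [hw, hsw, Function.comp, if_true, Bool.not_true, Bool.false_eq_true,
          if_false]
        exact (aux_invol hgen hτ (a r)).symm
    have h3 : τ (eval w g) = eval w g := by
      obtain ⟨p, hp⟩ := hg a
      rw [← hp, AlgHom.commutes]
    rw [map_sub, h1, h3, sub_self]
  calc coeff (auxEm j i) g = coeff (auxEm j i) σg := by rw [key]
    _ = τ (coeff (auxEm i j) g) := by
        rw [hσg, ← auxEm_swap i j, coeff_rename_mapDomain sw hswinj, coeff_map]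
        rfl

/-! ### The basis family -/

noncomputable def auxB (K : Type*) [Field K] (sd : K) {n : ℕ}
    (ij : (Fin n →₀ ℕ) × (Fin n →₀ ℕ)) : MvPolynomial (Fin n × Bool) K :=
  if toLex ij.1 < toLex ij.2 then
    monomial (auxEm ij.1 ij.2) 1 + monomial (auxEm ij.2 ij.1) 1
  else if ij.1 = ij.2 then monomial (auxEm ij.1 ij.1) 1
  else monomial (auxEm ij.2 ij.1) sd - monomial (auxEm ij.1 ij.2) sd

lemma auxB_lt {i j : Fin n →₀ ℕ} (h : toLex i < toLex j) (sd : K) :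
    auxB K sd (i, j) = monomial (auxEm i j) 1 + monomial (auxEm j i) 1 := by
  rw [auxB, if_pos h]

lemma auxB_diag (i : Fin n →₀ ℕ) (sd : K) :
    auxB K sd (i, i) = monomial (auxEm i i) 1 := by
  rw [auxB, if_neg (lt_irrefl _), if_pos rfl]

lemma auxB_gt {i j : Fin n →₀ ℕ} (h : toLex j < toLex i) (sd : K) :
    auxB K sd (i, j) = monomial (auxEm j i) sd - monomial (auxEm i j) sd := by
  have h1 : ¬ toLex (i, j).1 < toLex (i, j).2 := not_lt.mpr h.le
  have h2 : (i, j).1 ≠ (i, j).2 := by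
    intro hc
    simp only at hc
    rw [hc] at h
    exact lt_irrefl _ h
  rw [auxB, if_neg h1, if_neg h2]

lemma auxB_eq (sd : K) (ij : (Fin n →₀ ℕ) × (Fin n →₀ ℕ)) :
    auxB K sd ij =
      if toLex ij.1 < toLex ij.2 then
        (∏ r : Fin n, X (r, false) ^ ij.1 r) * (∏ r : Fin n, X (r, true) ^ ij.2 r) +
        (∏ r : Fin n, X (r, false) ^ ij.2 r) * (∏ r : Fin n, X (r, true) ^ ij.1 r)
      else if ij.1 = ij.2 then
        (∏ r : Fin n, X (r, false) ^ ij.1 r) * (∏ r : Fin n, X (r, true) ^ ij.1 r)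
      else
        C sd * ((∏ r : Fin n, X (r, false) ^ ij.2 r) * (∏ r : Fin n, X (r, true) ^ ij.1 r) -
          (∏ r : Fin n, X (r, false) ^ ij.1 r) * (∏ r : Fin n, X (r, true) ^ ij.2 r)) := by
  rw [auxB]
  split_ifs with h h'
  · rw [aux_prod_monomial, aux_prod_monomial]
  · rw [aux_prod_monomial]
  · rw [aux_prod_monomial, aux_prod_monomial,
      mul_sub, C_mul_monomial, C_mul_monomial, mul_one]

lemma aux_eval_monomial (τ : K →ₐ[ℚ] K) (a : Fin n → K) (i j : Fin n →₀ ℕ) (c : K) :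
    eval (fun p : Fin n × Bool => if p.2 then τ (a p.1) else a p.1) (monomial (auxEm i j) c)
      = c * ((∏ r : Fin n, a r ^ i r) * (∏ r : Fin n, τ (a r) ^ j r)) := by
  rw [eval_monomial]
  congr 1
  rw [Finsupp.prod_fintype _ _ (fun _ => pow_zero _), Fintype.prod_prod_type]
  simp only [auxEm_apply, Fintype.prod_bool, if_true, if_false, Bool.false_eq_true]
  rw [← Finset.prod_mul_distrib]
  exact Finset.prod_congr rfl fun r _ => mul_comm _ _

lemma aux_A_tau (hgen : ∀ x : K, ∃ a b : ℚ, x = algebraMap ℚ K a + algebraMap ℚ K b * sd)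
    (hτ : τ sd = -sd) (a : Fin n → K) (i j : Fin n →₀ ℕ) :
    τ ((∏ r : Fin n, a r ^ i r) * (∏ r : Fin n, τ (a r) ^ j r))
      = (∏ r : Fin n, a r ^ j r) * (∏ r : Fin n, τ (a r) ^ i r) := by
  rw [map_mul, map_prod, map_prod]
  simp only [map_pow]
  have h1 : ∀ r : Fin n, τ (τ (a r)) = a r := fun r => aux_invol hgen hτ (a r)
  rw [mul_comm]
  congr 1
  exact Finset.prod_congr rfl fun r _ => by rw [h1 r]

lemma aux_totalDegree {d : ℕ} (sd : K) (ij : (Fin n →₀ ℕ) × (Fin n →₀ ℕ))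
    (hd : (ij.1.sum fun _ m => m) + (ij.2.sum fun _ m => m) ≤ d) :
    (auxB K sd ij).totalDegree ≤ d := by
  have hdeg := fun i j : Fin n →₀ ℕ => auxEm_deg i j
  have h1 : ((auxEm ij.1 ij.2).sum fun _ m => m) ≤ d := by rw [hdeg]; exact hd
  have h2 : ((auxEm ij.2 ij.1).sum fun _ m => m) ≤ d := by rw [hdeg]; omega
  rw [auxB]
  split_ifs with h h'
  · exact (totalDegree_add _ _).trans (max_le
      ((totalDegree_monomial_le _ _).trans h1) ((totalDegree_monomial_le _ _).trans h2))
  · have h3 : ((auxEm ij.1 ij.1).sum fun _ m => m) ≤ d := by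
      rw [hdeg]; rw [← h'] at hd; omega
    exact (totalDegree_monomial_le _ _).trans h3
  · exact (totalDegree_sub _ _).trans (max_le
      ((totalDegree_monomial_le _ _).trans h2) ((totalDegree_monomial_le _ _).trans h1))

lemma aux_mem_eval {D : ℤ} (hsd : sd ^ 2 = (D : K))
    (hgen : ∀ x : K, ∃ a b : ℚ, x = algebraMap ℚ K a + algebraMap ℚ K b * sd)
    (hτ : τ sd = -sd) (hsd0 : sd ≠ 0)
    (ij : (Fin n →₀ ℕ) × (Fin n →₀ ℕ)) (a : Fin n → K) :
    eval (fun p : Fin n × Bool => if p.2 then τ (a p.1) else a p.1) (auxB K sd ij)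
      ∈ (algebraMap ℚ K).range := by
  rcases ij with ⟨i, j⟩
  rcases lt_trichotomy (toLex i) (toLex j) with h | h | h
  · rw [auxB_lt h, map_add, aux_eval_monomial, aux_eval_monomial, one_mul, one_mul]
    have := aux_trace hgen hτ ((∏ r : Fin n, a r ^ i r) * (∏ r : Fin n, τ (a r) ^ j r))
    rwa [aux_A_tau hgen hτ] at this
  · have h' : i = j := toLex.injective h
    subst h'
    rw [auxB_diag, aux_eval_monomial, one_mul]
    apply aux_fix hgen hτ hsd0
    exact aux_A_tau hgen hτ a i i
  · rw [auxB_gt h, map_sub, aux_eval_monomial, aux_eval_monomial, ← mul_sub]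
    have := aux_anti hsd hgen hτ ((∏ r : Fin n, a r ^ j r) * (∏ r : Fin n, τ (a r) ^ i r))
    rwa [aux_A_tau hgen hτ] at this

lemma auxB_coeff_ne (sd : K) {kl : (Fin n →₀ ℕ) × (Fin n →₀ ℕ)} {μ : (Fin n × Bool) →₀ ℕ}
    (h1 : μ ≠ auxEm kl.1 kl.2) (h2 : μ ≠ auxEm kl.2 kl.1) :
    coeff μ (auxB K sd kl) = 0 := by
  rw [auxB]
  split_ifs with h h'
  · rw [coeff_add, coeff_monomial, coeff_monomial, if_neg (fun hc => h1 hc.symm),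
      if_neg (fun hc => h2 hc.symm), add_zero]
  · rw [← h'] at h1
    rw [coeff_monomial, if_neg (fun hc => h1 hc.symm)]
  · rw [coeff_sub, coeff_monomial, coeff_monomial, if_neg (fun hc => h2 hc.symm),
      if_neg (fun hc => h1 hc.symm), sub_zero]

lemma aux_exists {d : ℕ}
    (hgen : ∀ x : K, ∃ a b : ℚ, x = algebraMap ℚ K a + algebraMap ℚ K b * sd)
    (hτ : τ sd = -sd) (hsd0 : sd ≠ 0)
    (i j : Fin n →₀ ℕ)
    (hidx : (i.sum fun _ m => m) + (j.sum fun _ m => m) ≤ d) (c : K)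
    (hcc : i = j → τ c = c) :
    ∃ h ∈ Submodule.span ℚ (Set.range fun ij :
        {ij : (Fin n →₀ ℕ) × (Fin n →₀ ℕ) //
          (ij.1.sum fun _ m => m) + (ij.2.sum fun _ m => m) ≤ d} => auxB K sd ij.val),
      coeff (auxEm i j) h = c ∧ coeff (auxEm j i) h = τ c ∧
      ∀ ν, ν ≠ auxEm i j → ν ≠ auxEm j i → coeff ν h = 0 := by
  have main_lt : ∀ (i j : Fin n →₀ ℕ),
      ((i.sum fun _ m => m) + (j.sum fun _ m => m) ≤ d) → ∀ c : K, toLex i < toLex j →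
      ∃ h ∈ Submodule.span ℚ (Set.range fun ij :
          {ij : (Fin n →₀ ℕ) × (Fin n →₀ ℕ) //
            (ij.1.sum fun _ m => m) + (ij.2.sum fun _ m => m) ≤ d} => auxB K sd ij.val),
        coeff (auxEm i j) h = c ∧ coeff (auxEm j i) h = τ c ∧
        ∀ ν, ν ≠ auxEm i j → ν ≠ auxEm j i → coeff ν h = 0 := by
    clear hidx hcc c i j
    intro i j hidx c hlt
    have hne : i ≠ j := fun hc => by rw [hc] at hlt; exact lt_irrefl _ hlt
    have hemne : auxEm i j ≠ auxEm j i := fun hc => hne (auxEm_inj hc).1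
    obtain ⟨p, q, hc⟩ := hgen c
    refine ⟨p • auxB K sd (i, j) + q • auxB K sd (j, i), ?_, ?_, ?_, ?_⟩
    · exact Submodule.add_mem _
        (Submodule.smul_mem _ _ (Submodule.subset_span ⟨⟨(i, j), hidx⟩, rfl⟩))
        (Submodule.smul_mem _ _ (Submodule.subset_span ⟨⟨(j, i),
          show (j.sum fun _ m => m) + (i.sum fun _ m => m) ≤ d by omega⟩, rfl⟩))
    · simp only [auxB_lt hlt, auxB_gt hlt, coeff_add, coeff_sub, coeff_smul,
        coeff_monomial, if_pos rfl, if_neg (fun hc' : auxEm j i = auxEm i j => hemne hc'.symm),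
        add_zero, sub_zero, eq_self_iff_true, if_true]
      rw [Algebra.smul_def, Algebra.smul_def, mul_one, hc]
    · simp only [auxB_lt hlt, auxB_gt hlt, coeff_add, coeff_sub, coeff_smul,
        coeff_monomial, if_pos rfl, if_neg (fun hc' : auxEm i j = auxEm j i => hemne hc'),
        zero_add, zero_sub, eq_self_iff_true, if_true]
      rw [Algebra.smul_def, Algebra.smul_def, mul_one, hc, aux_tau_apply hτ]
      ring
    · intro ν hν1 hν2
      simp only [auxB_lt hlt, auxB_gt hlt, coeff_add, coeff_sub, coeff_smul,
        coeff_monomial, if_neg (fun hc' : auxEm i j = ν => hν1 hc'.symm),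
        if_neg (fun hc' : auxEm j i = ν => hν2 hc'.symm)]
      simp [Algebra.smul_def]
  rcases lt_trichotomy (toLex i) (toLex j) with hlt | heq | hgt
  · exact main_lt i j hidx c hlt
  · have hij : i = j := toLex.injective heq
    subst hij
    have hτc : τ c = c := hcc rfl
    obtain ⟨p, hp⟩ := aux_fix hgen hτ hsd0 hτc
    refine ⟨p • auxB K sd (i, i), ?_, ?_, ?_, ?_⟩
    · exact Submodule.smul_mem _ _ (Submodule.subset_span ⟨⟨(i, i),
        show (i.sum fun _ m => m) + (i.sum fun _ m => m) ≤ d by omega⟩, rfl⟩)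
    · rw [Algebra.smul_def, MvPolynomial.algebraMap_apply, coeff_C_mul, auxB_diag, coeff_monomial, if_pos rfl, mul_one, hp]
    · rw [Algebra.smul_def, MvPolynomial.algebraMap_apply, coeff_C_mul, auxB_diag, coeff_monomial, if_pos rfl, mul_one, hp,
        hτc]
    · intro ν hν1 _
      rw [Algebra.smul_def, MvPolynomial.algebraMap_apply, coeff_C_mul, auxB_diag, coeff_monomial, if_neg (fun hc' => hν1 hc'.symm), mul_zero]
  · obtain ⟨h, hm, h1, h2, h3⟩ := main_lt j i (by omega) (τ c) hgt
    refine ⟨h, hm, ?_, h1, fun ν hν1 hν2 => h3 ν hν2 hν1⟩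
    rw [h2, aux_invol hgen hτ]

lemma aux_li {d : ℕ}
    (hind : ∀ p q : ℚ, algebraMap ℚ K p + algebraMap ℚ K q * sd = 0 → p = 0 ∧ q = 0) :
    LinearIndependent ℚ (fun ij :
        {ij : (Fin n →₀ ℕ) × (Fin n →₀ ℕ) //
          (ij.1.sum fun _ m => m) + (ij.2.sum fun _ m => m) ≤ d} => auxB K sd ij.val) := by
  classical
  rw [linearIndependent_iff'']
  rintro s gco hg hsum ⟨⟨i, j⟩, hij⟩
  have hij2 : (i.sum fun _ m => m) + (j.sum fun _ m => m) ≤ d := hij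
  have hij' : (j.sum fun _ m => m) + (i.sum fun _ m => m) ≤ d := by omega
  set I : {ij : (Fin n →₀ ℕ) × (Fin n →₀ ℕ) //
    (ij.1.sum fun _ m => m) + (ij.2.sum fun _ m => m) ≤ d} := ⟨(i, j), hij⟩ with hI
  set J : {ij : (Fin n →₀ ℕ) × (Fin n →₀ ℕ) //
    (ij.1.sum fun _ m => m) + (ij.2.sum fun _ m => m) ≤ d} := ⟨(j, i), hij'⟩ with hJ
  have hcoeff : ∀ μ, ∑ kl ∈ s, gco kl • coeff μ (auxB K sd kl.val) = 0 := by
    intro μ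
    have h0 := congrArg (coeff μ) hsum
    rw [coeff_sum] at h0
    simp only [coeff_smul] at h0
    simpa using h0
  have key : ∀ μ, (μ = auxEm i j ∨ μ = auxEm j i) →
      ∑ kl ∈ ({I, J} : Finset {ij : (Fin n →₀ ℕ) × (Fin n →₀ ℕ) //
        (ij.1.sum fun _ m => m) + (ij.2.sum fun _ m => m) ≤ d}),
        gco kl • coeff μ (auxB K sd kl.val) = 0 := by
    intro μ hμ
    have e1 : ∑ kl ∈ s ∪ {I, J}, gco kl • coeff μ (auxB K sd kl.val)
        = ∑ kl ∈ s, gco kl • coeff μ (auxB K sd kl.val) :=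
      (Finset.sum_subset Finset.subset_union_left
        (fun x _ hxs => by rw [hg x hxs, zero_smul])).symm
    have e2 : ∑ kl ∈ s ∪ {I, J}, gco kl • coeff μ (auxB K sd kl.val)
        = ∑ kl ∈ ({I, J} : Finset {ij : (Fin n →₀ ℕ) × (Fin n →₀ ℕ) //
          (ij.1.sum fun _ m => m) + (ij.2.sum fun _ m => m) ≤ d}),
          gco kl • coeff μ (auxB K sd kl.val) := by
      refine (Finset.sum_subset Finset.subset_union_right (fun x _ hxIJ => ?_)).symm
      rw [Finset.mem_insert, Finset.mem_singleton] at hxIJ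
      push_neg at hxIJ
      have hx1 : μ ≠ auxEm x.val.1 x.val.2 := by
        intro hc
        rcases hμ with hμ | hμ <;> rw [hμ] at hc
        · have := auxEm_inj hc
          exact hxIJ.1 (Subtype.ext (Prod.ext this.1.symm this.2.symm))
        · have := auxEm_inj hc
          exact hxIJ.2 (Subtype.ext (Prod.ext this.1.symm this.2.symm))
      have hx2 : μ ≠ auxEm x.val.2 x.val.1 := by
        intro hc
        rcases hμ with hμ | hμ <;> rw [hμ] at hc
        · have := auxEm_inj hc
          exact hxIJ.2 (Subtype.ext (Prod.ext this.2.symm this.1.symm))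
        · have := auxEm_inj hc
          exact hxIJ.1 (Subtype.ext (Prod.ext this.2.symm this.1.symm))
      rw [auxB_coeff_ne sd hx1 hx2, Algebra.smul_def, mul_zero]
    rw [← e2, e1, hcoeff]
  by_cases hij : i = j
  · subst hij
    have hIJ : I = J := rfl
    have h0 := key (auxEm i i) (Or.inl rfl)
    rw [← hIJ, Finset.insert_eq_self.mpr (Finset.mem_singleton_self I),
      Finset.sum_singleton] at h0
    simp only [hI, auxB_diag, coeff_monomial, eq_self_iff_true, if_true,
      Algebra.smul_def, mul_one] at h0
    exact (algebraMap ℚ K).injective (by simpa using h0)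
  · have hIJ : I ≠ J := by
      intro hc
      have := congrArg (fun x : {ij : (Fin n →₀ ℕ) × (Fin n →₀ ℕ) //
        (ij.1.sum fun _ m => m) + (ij.2.sum fun _ m => m) ≤ d} => x.val.1) hc
      exact hij this
    have hemne : auxEm i j ≠ auxEm j i := fun hc => hij (auxEm_inj hc).1
    rcases lt_trichotomy (toLex i) (toLex j) with hlt | heq | hgt
    · have h0 := key (auxEm i j) (Or.inl rfl)
      rw [Finset.sum_pair hIJ] at h0
      simp only [hI, hJ, auxB_lt hlt, auxB_gt hlt, coeff_add, coeff_sub, coeff_monomial,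
        eq_self_iff_true, if_true, hemne, Ne.symm hemne, if_false, add_zero, sub_zero,
        Algebra.smul_def, mul_one] at h0
      have h0' : algebraMap ℚ K (gco I) + algebraMap ℚ K (gco J) * sd = 0 := by
        rw [hI, hJ]; linear_combination h0
      exact (hind _ _ h0').1
    · exact absurd (toLex.injective heq) hij
    · have h0 := key (auxEm j i) (Or.inr rfl)
      rw [Finset.sum_pair hIJ] at h0
      simp only [hI, hJ, auxB_gt hgt, auxB_lt hgt, coeff_add, coeff_sub, coeff_monomial,
        eq_self_iff_true, if_true, hemne, Ne.symm hemne, if_false, zero_add, sub_zero,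
        add_zero, zero_sub, Algebra.smul_def, mul_one] at h0
      have h0' : algebraMap ℚ K (gco J) + algebraMap ℚ K (gco I) * sd = 0 := by
        rw [hI, hJ]; linear_combination h0
      exact (hind _ _ h0').2

lemma aux_span_deg {d : ℕ} (sd : K) (x : MvPolynomial (Fin n × Bool) K)
    (hx : x ∈ Submodule.span ℚ (Set.range fun ij :
        {ij : (Fin n →₀ ℕ) × (Fin n →₀ ℕ) //
          (ij.1.sum fun _ m => m) + (ij.2.sum fun _ m => m) ≤ d} => auxB K sd ij.val)) :
    x.totalDegree ≤ d := by
  refine Submodule.span_induction ?_ ?_ ?_ ?_ hx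
  · rintro y ⟨ij, rfl⟩
    exact aux_totalDegree sd ij.val ij.2
  · simp [totalDegree_zero]
  · intro a b _ _ ha hb
    exact (totalDegree_add a b).trans (max_le ha hb)
  · intro r a _ ha
    exact (totalDegree_smul_le r a).trans ha

lemma aux_span_eval {D : ℤ} {d : ℕ} (hsd : sd ^ 2 = (D : K))
    (hgen : ∀ x : K, ∃ a b : ℚ, x = algebraMap ℚ K a + algebraMap ℚ K b * sd)
    (hτ : τ sd = -sd) (hsd0 : sd ≠ 0)
    (x : MvPolynomial (Fin n × Bool) K)
    (hx : x ∈ Submodule.span ℚ (Set.range fun ij :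
        {ij : (Fin n →₀ ℕ) × (Fin n →₀ ℕ) //
          (ij.1.sum fun _ m => m) + (ij.2.sum fun _ m => m) ≤ d} => auxB K sd ij.val))
    (a : Fin n → K) :
    eval (fun p : Fin n × Bool => if p.2 then τ (a p.1) else a p.1) x
      ∈ (algebraMap ℚ K).range := by
  refine Submodule.span_induction ?_ ?_ ?_ ?_ hx
  · rintro y ⟨ij, rfl⟩
    exact aux_mem_eval hsd hgen hτ hsd0 ij.val a
  · rw [map_zero]
    exact ⟨0, map_zero _⟩
  · intro u v _ _ hu hv
    rw [map_add]
    exact add_mem hu hv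
  · intro r u _ hu
    have : r • u = C (algebraMap ℚ K r) * u := by
      rw [← smul_eq_C_mul, algebraMap_smul]
    rw [this, map_mul, eval_C]
    exact mul_mem ⟨r, rfl⟩ hu

lemma aux_span {D : ℤ} {d : ℕ} (hsd : sd ^ 2 = (D : K))
    (hgen : ∀ x : K, ∃ a b : ℚ, x = algebraMap ℚ K a + algebraMap ℚ K b * sd)
    (hind : ∀ p q : ℚ, algebraMap ℚ K p + algebraMap ℚ K q * sd = 0 → p = 0 ∧ q = 0)
    (hτ : τ sd = -sd) (hsd0 : sd ≠ 0)
    (g : MvPolynomial (Fin n × Bool) K) (hdeg : g.totalDegree ≤ d)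
    (heval : ∀ a : Fin n → K,
      eval (fun p : Fin n × Bool => if p.2 then τ (a p.1) else a p.1) g
        ∈ (algebraMap ℚ K).range) :
    g ∈ Submodule.span ℚ (Set.range fun ij :
        {ij : (Fin n →₀ ℕ) × (Fin n →₀ ℕ) //
          (ij.1.sum fun _ m => m) + (ij.2.sum fun _ m => m) ≤ d} => auxB K sd ij.val) := by
  classical
  suffices H : ∀ (N : ℕ) (g : MvPolynomial (Fin n × Bool) K), g.support.card ≤ N →
      g.totalDegree ≤ d →
      (∀ a : Fin n → K,
        eval (fun p : Fin n × Bool => if p.2 then τ (a p.1) else a p.1) g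
          ∈ (algebraMap ℚ K).range) →
      g ∈ Submodule.span ℚ (Set.range fun ij :
        {ij : (Fin n →₀ ℕ) × (Fin n →₀ ℕ) //
          (ij.1.sum fun _ m => m) + (ij.2.sum fun _ m => m) ≤ d} => auxB K sd ij.val) by
    exact H g.support.card g le_rfl hdeg heval
  intro N
  induction N with
  | zero =>
    intro g hcard _ _
    have : g.support = ∅ := Finset.card_eq_zero.mp (Nat.le_zero.mp hcard)
    rw [show g = 0 from MvPolynomial.support_eq_empty.mp this]
    exact Submodule.zero_mem _
  | succ N IH =>
    intro g hcard hdeg heval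
    by_cases h0 : g = 0
    · rw [h0]; exact Submodule.zero_mem _
    obtain ⟨μ, hμ⟩ := MvPolynomial.support_nonempty.mpr h0
    set i : Fin n →₀ ℕ := Finsupp.equivFunOnFinite.symm fun r => μ (r, false) with hi
    set j : Fin n →₀ ℕ := Finsupp.equivFunOnFinite.symm fun r => μ (r, true) with hj
    have hμeq : μ = auxEm i j := auxEm_surj μ
    have hidx : (i.sum fun _ m => m) + (j.sum fun _ m => m) ≤ d := by
      rw [← auxEm_deg, ← hμeq]
      exact (le_totalDegree hμ).trans hdeg
    have hsym := aux_sym hgen hind hτ hsd0 g heval i j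
    have hcc : i = j → τ (coeff (auxEm i j) g) = coeff (auxEm i j) g := by
      intro hij
      conv_rhs => rw [hij]
      rw [← hsym, hij]
    obtain ⟨h, hm, hc1, hc2, h3⟩ :=
      aux_exists hgen hτ hsd0 i j hidx (coeff (auxEm i j) g) hcc
    have hsub : (g - h).support ⊆ g.support.erase μ := by
      intro ν hν
      rw [MvPolynomial.mem_support_iff, coeff_sub] at hν
      rw [Finset.mem_erase, MvPolynomial.mem_support_iff]
      by_cases hν1 : ν = auxEm i j
      · exfalso; rw [hν1, hc1, sub_self] at hν; exact hν rfl
      by_cases hν2 : ν = auxEm j i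
      · exfalso; rw [hν2, hc2, ← hsym, sub_self] at hν; exact hν rfl
      rw [h3 ν hν1 hν2, sub_zero] at hν
      exact ⟨by rw [hμeq]; exact hν1, hν⟩
    have hcard' : (g - h).support.card ≤ N := by
      have h1 := Finset.card_le_card hsub
      rw [Finset.card_erase_of_mem hμ] at h1
      omega
    have hdeg' : (g - h).totalDegree ≤ d :=
      (totalDegree_sub _ _).trans (max_le hdeg (aux_span_deg sd h hm))
    have heval' : ∀ a : Fin n → K,
        eval (fun p : Fin n × Bool => if p.2 then τ (a p.1) else a p.1) (g - h)
          ∈ (algebraMap ℚ K).range := by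
      intro a
      rw [map_sub]
      exact sub_mem (heval a) (aux_span_eval hsd hgen hτ hsd0 h hm a)
    have hgh := IH (g - h) hcard' hdeg' heval'
    have : g = (g - h) + h := by ring
    rw [this]
    exact Submodule.add_mem _ hgh hm

end

open MvPolynomial in
/-- The generalized polynomials g_{ij} (for multi-indices i, j with |i|+|j| ≤ d),
defined by g_{ij} = z^i τ(z)^j + τ(z)^i z^j and g_{ji} = √D (z^i τ(z)^j − τ(z)^i z^j)
for i < j lexicographically, together with g_{ii} = z^i τ(z)^i, form a ℚ-basis of the
space Γ_K^{n,d} of ℚ-valued generalized polynomials of degree at most d. -/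
theorem stmt_4 (D : ℤ) (hsq : Squarefree D) (hD0 : D ≠ 0) (hD1 : D ≠ 1)
    (K : Type*) [Field K] [Algebra ℚ K] (sd : K) (hsd : sd ^ 2 = (D : K))
    (hgen : ∀ x : K, ∃ a b : ℚ, x = algebraMap ℚ K a + algebraMap ℚ K b * sd)
    (τ : K →ₐ[ℚ] K) (hτ : τ sd = -sd)
    (n : ℕ) (hn : 1 ≤ n) (d : ℕ) :
    ∃ S : Submodule ℚ (MvPolynomial (Fin n × Bool) K),
      (S : Set (MvPolynomial (Fin n × Bool) K)) =
        {g | g.totalDegree ≤ d ∧ ∀ a : Fin n → K,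
          MvPolynomial.eval (fun p => if p.2 then τ (a p.1) else a p.1) g
            ∈ (algebraMap ℚ K).range} ∧
      ∃ B : Module.Basis {ij : (Fin n →₀ ℕ) × (Fin n →₀ ℕ) //
          (ij.1.sum fun _ m => m) + (ij.2.sum fun _ m => m) ≤ d} ℚ S,
        ∀ ij, (B ij : MvPolynomial (Fin n × Bool) K) =
          if toLex ij.val.1 < toLex ij.val.2 then
            (∏ r : Fin n, X (r, false) ^ ij.val.1 r) *
              (∏ r : Fin n, X (r, true) ^ ij.val.2 r) +
            (∏ r : Fin n, X (r, false) ^ ij.val.2 r) *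
              (∏ r : Fin n, X (r, true) ^ ij.val.1 r)
          else if ij.val.1 = ij.val.2 then
            (∏ r : Fin n, X (r, false) ^ ij.val.1 r) *
              (∏ r : Fin n, X (r, true) ^ ij.val.1 r)
          else
            C sd *
              ((∏ r : Fin n, X (r, false) ^ ij.val.2 r) *
                 (∏ r : Fin n, X (r, true) ^ ij.val.1 r) -
               (∏ r : Fin n, X (r, false) ^ ij.val.1 r) *
                 (∏ r : Fin n, X (r, true) ^ ij.val.2 r)) := by
  have hind := aux_indep D hsq hD1 K sd hsd
  have hsd0 := aux_sd_ne D hD0 K sd hsd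
  have hli := aux_li (K := K) (sd := sd) (n := n) (d := d) hind
  refine ⟨Submodule.span ℚ (Set.range fun ij : {ij : (Fin n →₀ ℕ) × (Fin n →₀ ℕ) //
      (ij.1.sum fun _ m => m) + (ij.2.sum fun _ m => m) ≤ d} => auxB K sd ij.val),
    ?_, Module.Basis.span hli, ?_⟩
  · ext g
    simp only [SetLike.mem_coe, Set.mem_setOf_eq]
    constructor
    · intro hg
      exact ⟨aux_span_deg sd g hg, fun a => aux_span_eval hsd hgen hτ hsd0 g hg a⟩
    · rintro ⟨h1, h2⟩
      exact aux_span hsd hgen hind hτ hsd0 g h1 h2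
  · intro ij
    rw [Module.Basis.span_apply]
    exact auxB_eq sd ij.val
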